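/- Proposition (r-th moment): for every natural number r ≥ 1, the r-th moment of the GRL distribution is μ_r = ∫_{0}^{∞} t^r · f(t) dt = (r·λ^(r/α)/(α(λ−1))) · (λ + r/α − 1) · Γ(r/α), where Γ denotes the Euler gamma function. -/

import Mathlib

open Real MeasureTheory

lemma grl_aux_integrable {p q b : ℝ} (hp : 0 < p) (hq : -1 < q) (hb : 0 < b) :
    IntegrableOn (fun x => x ^ q * Real.exp (-b * x ^ p)) (Set.Ioi (0 : ℝ)) := by
  set s : ℝ := (q + 1) / p - 1 with hs_def
  have hs1 : 0 < (q + 1) / p := div_pos (by linarith) hp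
  have h1 : IntegrableOn (fun y => Real.exp (-y) * y ^ s) (Set.Ioi (0 : ℝ)) := by
    have := Real.GammaIntegral_convergent hs1
    simpa [hs_def] using this
  have h2 : IntegrableOn (fun y => Real.exp (-(b * y)) * (b * y) ^ s) (Set.Ioi (0 : ℝ)) := by
    have := (integrableOn_Ioi_comp_mul_left_iff
      (fun y => Real.exp (-y) * y ^ s) 0 hb).mpr (by simpa using h1)
    simpa using this
  have h3 := (integrableOn_Ioi_comp_rpow_iff'
    (fun y => Real.exp (-(b * y)) * (b * y) ^ s) (p := p) hp.ne').mpr h2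
  have h4 : IntegrableOn
      (fun x => b ^ (-s) * (x ^ (p - 1) • (Real.exp (-(b * x ^ p)) * (b * x ^ p) ^ s)))
      (Set.Ioi (0 : ℝ)) := h3.const_mul (b ^ (-s))
  refine IntegrableOn.congr_fun h4 (fun x hx => ?_) measurableSet_Ioi
  have hx0 : (0 : ℝ) < x := hx
  have hxp : (0 : ℝ) < x ^ p := Real.rpow_pos_of_pos hx0 p
  have hbs : (b * x ^ p) ^ s = b ^ s * x ^ (p * s) := by
    rw [Real.mul_rpow hb.le hxp.le, ← Real.rpow_mul hx0.le]
  rw [smul_eq_mul]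
  rw [hbs]
  have hq' : q = p - 1 + p * s := by
    have h5 : p * ((q + 1) / p) = q + 1 := by field_simp [hp.ne']
    rw [hs_def]; linear_combination -h5
  rw [hq', Real.rpow_add hx0, Real.rpow_neg hb.le, neg_mul]
  have hbs' : (0:ℝ) < b ^ s := Real.rpow_pos_of_pos hb s
  field_simp

theorem grl_moment (lam α : ℝ) (hlam : 2 ≤ lam) (hα : 0 < α) (r : ℕ) (hr : 1 ≤ r) :
    ∫ t in Set.Ioi (0 : ℝ),
      t ^ r * ((α / (lam * (lam - 1))) * t ^ (α - 1) * (lam + t ^ α / lam - 2) *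
        Real.exp (-(t ^ α / lam)))
      = ((r : ℝ) * lam ^ ((r : ℝ) / α) / (α * (lam - 1))) * (lam + (r : ℝ) / α - 1) *
          Real.Gamma ((r : ℝ) / α) := by
  have hlam0 : (0 : ℝ) < lam := by linarith
  have hb : (0 : ℝ) < lam⁻¹ := inv_pos.mpr hlam0
  have hr1 : (1 : ℝ) ≤ (r : ℝ) := by exact_mod_cast hr
  set C : ℝ := α / (lam * (lam - 1)) with hC
  have hq1 : (-1 : ℝ) < (r : ℝ) + α - 1 := by linarith
  have hq2 : (-1 : ℝ) < (r : ℝ) + 2 * α - 1 := by linarith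
  have key : ∀ t ∈ Set.Ioi (0 : ℝ),
      t ^ r * (C * t ^ (α - 1) * (lam + t ^ α / lam - 2) * Real.exp (-(t ^ α / lam)))
      = (C * (lam - 2)) * (t ^ ((r : ℝ) + α - 1) * Real.exp (-lam⁻¹ * t ^ α))
        + (C * lam⁻¹) * (t ^ ((r : ℝ) + 2 * α - 1) * Real.exp (-lam⁻¹ * t ^ α)) := by
    intro t ht
    have ht0 : (0 : ℝ) < t := ht
    have e1 : t ^ ((r : ℝ) + α - 1) = t ^ (r : ℝ) * t ^ (α - 1) := by
      rw [← Real.rpow_add ht0]; ring_nf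
    have e2 : t ^ ((r : ℝ) + 2 * α - 1) = t ^ (r : ℝ) * t ^ (α - 1) * t ^ α := by
      rw [← Real.rpow_add ht0, ← Real.rpow_add ht0]; ring_nf
    have e3 : t ^ r = t ^ (r : ℝ) := (Real.rpow_natCast t r).symm
    have e4 : -(t ^ α / lam) = -lam⁻¹ * t ^ α := by ring
    rw [e1, e2, e3, e4]
    have e5 : lam + t ^ α / lam - 2 = (lam - 2) + lam⁻¹ * t ^ α := by
      field_simp
      ring
    rw [e5]; ring
  rw [MeasureTheory.setIntegral_congr_fun measurableSet_Ioi key]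
  have hi1 := grl_aux_integrable hα hq1 hb
  have hi2 := grl_aux_integrable hα hq2 hb
  rw [MeasureTheory.integral_add (hi1.const_mul _) (hi2.const_mul _),
    MeasureTheory.integral_const_mul, MeasureTheory.integral_const_mul,
    integral_rpow_mul_exp_neg_mul_rpow hα hq1 hb,
    integral_rpow_mul_exp_neg_mul_rpow hα hq2 hb]
  have ea1 : -((r : ℝ) + α - 1 + 1) / α = -((r : ℝ) / α + 1) := by
    field_simp
    ring
  have ea2 : -((r : ℝ) + 2 * α - 1 + 1) / α = -((r : ℝ) / α + 2) := by
    field_simp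
    ring
  have eb1 : ((r : ℝ) + α - 1 + 1) / α = (r : ℝ) / α + 1 := by field_simp; ring
  have eb2 : ((r : ℝ) + 2 * α - 1 + 1) / α = (r : ℝ) / α + 2 := by
    field_simp
    ring
  rw [ea1, ea2, eb1, eb2]
  set x : ℝ := (r : ℝ) / α with hx_def
  have hx : 0 < x := div_pos (by linarith) hα
  have hG1 : Real.Gamma (x + 1) = x * Real.Gamma x := Real.Gamma_add_one hx.ne'
  have hG2 : Real.Gamma (x + 2) = (x + 1) * (x * Real.Gamma x) := by
    have : x + 2 = (x + 1) + 1 := by ring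
    rw [this, Real.Gamma_add_one (by positivity), hG1]
  have hp1 : (lam⁻¹ : ℝ) ^ (-(x + 1)) = lam ^ x * lam := by
    rw [Real.inv_rpow hlam0.le, Real.rpow_neg hlam0.le, inv_inv, Real.rpow_add hlam0,
      Real.rpow_one]
  have hp2 : (lam⁻¹ : ℝ) ^ (-(x + 2)) = lam ^ x * lam * lam := by
    rw [Real.inv_rpow hlam0.le, Real.rpow_neg hlam0.le, inv_inv,
      show x + 2 = x + 1 + 1 by ring, Real.rpow_add hlam0, Real.rpow_add hlam0, Real.rpow_one]
  rw [hp1, hp2, hG1, hG2]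
  have hr_eq : (r : ℝ) = x * α := by
    rw [hx_def]; field_simp
  rw [hr_eq, hC]
  have hlam1 : lam - 1 ≠ 0 := by intro h; linarith
  field_simp
  ring
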